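/- If a labeled graph G on [n] is 12-representable by a 321-avoiding word, then there is a relabeling of G (obtained by moving isolated vertices to the largest labels) that is 12-representable by a 321-avoiding permutation. -/

import Mathlib

/-- Every occurrence of `j` precedes every occurrence of `i` in the word `w`. -/
def EveryBefore (w : List ℕ) (j i : ℕ) : Prop :=
  ∀ p q : Fin w.length, w.get p = j → w.get q = i → p < q

/-- The word `w` 12-represents the graph `G` on the vertex set `{1, …, n}`:
`w` uses only letters from `{1, …, n}`, contains each of them at least once, and
for `i < j` in `{1, …, n}`, `i` and `j` are adjacent iff every `j` occurs before every `i`. -/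
def Represents12 (n : ℕ) (G : SimpleGraph ℕ) (w : List ℕ) : Prop :=
  (∀ x ∈ w, 1 ≤ x ∧ x ≤ n) ∧
  (∀ i, 1 ≤ i → i ≤ n → i ∈ w) ∧
  (∀ i j, 1 ≤ i → i < j → j ≤ n → (G.Adj i j ↔ EveryBefore w j i))

/-- `w` is a permutation of `{1, …, n}`, i.e. each letter occurs exactly once. -/
def IsPermWord (n : ℕ) (w : List ℕ) : Prop :=
  w.Perm (List.range' 1 n)

/-- `w` avoids the pattern 321: no strictly decreasing subsequence of length 3. -/
def Avoids321 (w : List ℕ) : Prop :=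
  ¬ ∃ p q r : Fin w.length, p < q ∧ q < r ∧ w.get r < w.get q ∧ w.get q < w.get p

/-- `v` is an isolated vertex of `G` restricted to `{1, …, n}`. -/
def IsolatedIn (n : ℕ) (G : SimpleGraph ℕ) (v : ℕ) : Prop :=
  ∀ u, 1 ≤ u → u ≤ n → ¬ G.Adj v u

namespace Stmt9Aux

variable (w : List ℕ)

noncomputable def Fp (hw : 0 < w.length) (i : ℕ) : Fin w.length :=
  if h : (Finset.univ.filter (fun p : Fin w.length => w.get p = i)).Nonempty
  then (Finset.univ.filter (fun p : Fin w.length => w.get p = i)).min' h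
  else ⟨0, hw⟩

noncomputable def Lp (hw : 0 < w.length) (i : ℕ) : Fin w.length :=
  if h : (Finset.univ.filter (fun p : Fin w.length => w.get p = i)).Nonempty
  then (Finset.univ.filter (fun p : Fin w.length => w.get p = i)).max' h
  else ⟨0, hw⟩

variable {w}

lemma nonempty_pos {i : ℕ} (hi : i ∈ w) :
    (Finset.univ.filter (fun p : Fin w.length => w.get p = i)).Nonempty := by
  obtain ⟨p, hp⟩ := List.mem_iff_get.mp hi
  exact ⟨p, by simpa using hp⟩

lemma get_Fp {i : ℕ} (hw : 0 < w.length) (hi : i ∈ w) : w.get (Fp w hw i) = i := by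
  rw [Fp, dif_pos (nonempty_pos hi)]
  have := Finset.min'_mem _ (nonempty_pos hi)
  simpa using this

lemma get_Lp {i : ℕ} (hw : 0 < w.length) (hi : i ∈ w) : w.get (Lp w hw i) = i := by
  rw [Lp, dif_pos (nonempty_pos hi)]
  have := Finset.max'_mem _ (nonempty_pos hi)
  simpa using this

lemma Fp_le {i : ℕ} (hw : 0 < w.length) {p : Fin w.length} (hp : w.get p = i) :
    Fp w hw i ≤ p := by
  have hi : i ∈ w := hp ▸ List.get_mem _ _
  rw [Fp, dif_pos (nonempty_pos hi)]
  exact Finset.min'_le _ _ (by simpa using hp)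

lemma le_Lp {i : ℕ} (hw : 0 < w.length) {p : Fin w.length} (hp : w.get p = i) :
    p ≤ Lp w hw i := by
  have hi : i ∈ w := hp ▸ List.get_mem _ _
  rw [Lp, dif_pos (nonempty_pos hi)]
  exact Finset.le_max' _ _ (by simpa using hp)

lemma Fp_le_Lp {i : ℕ} (hw : 0 < w.length) (hi : i ∈ w) : Fp w hw i ≤ Lp w hw i :=
  le_Lp hw (get_Fp hw hi)

section Rep
variable {n : ℕ} {G : SimpleGraph ℕ}

/-- For `1 ≤ i < j ≤ n`, adjacency means the last `j` is before the first `i`. -/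
lemma adj_iff (hw : 0 < w.length) (hrep : Represents12 n G w)
    {i j : ℕ} (h1 : 1 ≤ i) (hij : i < j) (hn : j ≤ n) :
    G.Adj i j ↔ Lp w hw j < Fp w hw i := by
  have hiw : i ∈ w := hrep.2.1 i h1 (le_trans (le_of_lt hij) hn)
  have hjw : j ∈ w := hrep.2.1 j (le_trans h1 (le_of_lt hij)) hn
  rw [hrep.2.2 i j h1 hij hn]
  constructor
  · intro h
    exact h _ _ (get_Lp hw hjw) (get_Fp hw hiw)
  · intro h p q hp hq
    exact lt_of_le_of_lt (le_Lp hw hp) (lt_of_lt_of_le h (Fp_le hw hq))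

/-- Key lemma: a letter that occurs with both a larger and a smaller letter
strictly between two of its occurrences is isolated. -/
lemma key_isolated (hw : 0 < w.length) (hA : Avoids321 w) (hrep : Represents12 n G w)
    {x : ℕ} (hx1 : 1 ≤ x) (hxn : x ≤ n)
    {p q : Fin w.length}
    (hp1 : Fp w hw x < p) (hp2 : p < Lp w hw x) (hpv : x < w.get p)
    (hq1 : Fp w hw x < q) (hq2 : q < Lp w hw x) (hqv : w.get q < x) :
    IsolatedIn n G x := by
  have hxw : x ∈ w := hrep.2.1 x hx1 hxn
  -- all letters before Fp x are < x
  have before : ∀ r : Fin w.length, r < Fp w hw x → w.get r < x := by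
    intro r hr
    rcases lt_trichotomy (w.get r) x with h | h | h
    · exact h
    · exact absurd (Fp_le hw h) (not_le.mpr hr)
    · exact absurd ⟨r, Fp w hw x, q, hr, hq1, by rw [get_Fp hw hxw]; exact ⟨hqv, h⟩⟩ hA
  -- all letters after Lp x are > x
  have after : ∀ r : Fin w.length, Lp w hw x < r → x < w.get r := by
    intro r hr
    rcases lt_trichotomy (w.get r) x with h | h | h
    · exact absurd ⟨p, Lp w hw x, r, hp2, hr, by rw [get_Lp hw hxw]; exact ⟨h, hpv⟩⟩ hA
    · exact absurd (le_Lp hw h) (not_le.mpr hr)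
    · exact h
  intro u hu1 hun hadj
  rcases lt_trichotomy x u with h | h | h
  · rw [adj_iff hw hrep hx1 h hun] at hadj
    have huw : u ∈ w := hrep.2.1 u hu1 hun
    have := before _ hadj
    rw [get_Lp hw huw] at this
    omega
  · exact G.irrefl (h ▸ hadj)
  · rw [G.adj_comm, adj_iff hw hrep hu1 h hxn] at hadj
    have huw : u ∈ w := hrep.2.1 u hu1 hun
    have := after _ hadj
    rw [get_Fp hw huw] at this
    omega

end Rep

section Rp
open scoped Classical

variable (w : List ℕ)

/-- The chosen representative occurrence of letter `i`. -/
noncomputable def Rp (hw : 0 < w.length) (i : ℕ) : Fin w.length :=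
  if (∀ p : Fin w.length, Fp w hw i < p → p < Lp w hw i → w.get p ≠ i → i < w.get p)
  then Fp w hw i else Lp w hw i

variable {w}

lemma Fp_le_Rp {i : ℕ} (hw : 0 < w.length) (hi : i ∈ w) : Fp w hw i ≤ Rp w hw i := by
  rw [Rp]; split
  · exact le_refl _
  · exact Fp_le_Lp hw hi

lemma Rp_le_Lp {i : ℕ} (hw : 0 < w.length) (hi : i ∈ w) : Rp w hw i ≤ Lp w hw i := by
  rw [Rp]; split
  · exact Fp_le_Lp hw hi
  · exact le_refl _

variable {n : ℕ} {G : SimpleGraph ℕ}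

/-- If `x` is not isolated and some letter `< x` lies strictly between the first and last
occurrence of `x`, then every letter strictly in between (other than `x`) is `< x`. -/
lemma between_lt (hw : 0 < w.length) (hA : Avoids321 w) (hrep : Represents12 n G w)
    {x : ℕ} (hx1 : 1 ≤ x) (hxn : x ≤ n) (hniso : ¬ IsolatedIn n G x)
    {q : Fin w.length} (hq1 : Fp w hw x < q) (hq2 : q < Lp w hw x) (hqv : w.get q < x) :
    ∀ p : Fin w.length, Fp w hw x < p → p < Lp w hw x → w.get p ≠ x → w.get p < x := by
  intro p hp1 hp2 hpv
  rcases lt_trichotomy (w.get p) x with h | h | h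
  · exact h
  · exact absurd h hpv
  · exact absurd (key_isolated hw hA hrep hx1 hxn hp1 hp2 h hq1 hq2 hqv) hniso

/-- Core lemma: for non-isolated `x < y`, adjacency is equivalent to the representative
of `y` occurring before the representative of `x`. -/
lemma core (hw : 0 < w.length) (hA : Avoids321 w) (hrep : Represents12 n G w)
    {x y : ℕ} (hx1 : 1 ≤ x) (hxy : x < y) (hyn : y ≤ n)
    (hnisx : ¬ IsolatedIn n G x) (hnisy : ¬ IsolatedIn n G y) :
    G.Adj x y ↔ Rp w hw y < Rp w hw x := by
  have hxw : x ∈ w := hrep.2.1 x hx1 (le_of_lt (lt_of_lt_of_le hxy hyn))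
  have hyw : y ∈ w := hrep.2.1 y (le_trans hx1 (le_of_lt hxy)) hyn
  rw [adj_iff hw hrep hx1 hxy hyn]
  constructor
  · intro h
    exact lt_of_le_of_lt (Rp_le_Lp hw hyw)
      (lt_of_lt_of_le h (Fp_le_Rp hw hxw))
  · intro hR
    by_contra hne
    push_neg at hne
    -- hne : Fp x ≤ Lp y, in fact strict
    have hFL : Fp w hw x < Lp w hw y := by
      rcases lt_or_eq_of_le hne with h | h
      · exact h
      · exfalso
        have h1 := get_Fp hw hxw
        rw [h, get_Lp hw hyw] at h1
        omega
    by_cases Hy : ∀ p : Fin w.length, Fp w hw y < p → p < Lp w hw y → w.get p ≠ y → y < w.get p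
    · rw [Rp, if_pos Hy] at hR
      have hFxy : Fp w hw x ≠ Fp w hw y := by
        intro h
        have := get_Fp hw hxw
        rw [h, get_Fp hw hyw] at this
        omega
      rcases lt_or_gt_of_ne hFxy with hlt | hgt
      · -- Fp x < Fp y
        by_cases Hx : ∀ p : Fin w.length, Fp w hw x < p → p < Lp w hw x → w.get p ≠ x → x < w.get p
        · rw [Rp, if_pos Hx] at hR
          exact absurd hR (not_lt.mpr (le_of_lt hlt))
        · rw [Rp, if_neg Hx] at hR
          push_neg at Hx
          obtain ⟨q, hq1, hq2, hq3, hq4⟩ := Hx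
          have hq4' : w.get q < x := by omega
          have := between_lt hw hA hrep hx1 (le_of_lt (lt_of_lt_of_le hxy hyn)) hnisx
            hq1 hq2 hq4' (Fp w hw y) hlt hR
            (by rw [get_Fp hw hyw]; omega)
          rw [get_Fp hw hyw] at this; omega
      · -- Fp y < Fp x : use Hy at Fp x
        have := Hy (Fp w hw x) hgt hFL (by rw [get_Fp hw hxw]; omega)
        rw [get_Fp hw hxw] at this; omega
    · rw [Rp, if_neg Hy] at hR
      push_neg at Hy
      obtain ⟨q, hq1, hq2, hq3, hq4⟩ := Hy
      have hq4' : w.get q < y := by omega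
      by_cases Hx : ∀ p : Fin w.length, Fp w hw x < p → p < Lp w hw x → w.get p ≠ x → x < w.get p
      · rw [Rp, if_pos Hx] at hR
        exact absurd hne (not_le.mpr hR)
      · rw [Rp, if_neg Hx] at hR
        push_neg at Hx
        obtain ⟨q', hq1', hq2', hq3', hq4'⟩ := Hx
        have hq4'' : w.get q' < x := by omega
        have := between_lt hw hA hrep hx1 (le_of_lt (lt_of_lt_of_le hxy hyn)) hnisx
          hq1' hq2' hq4'' (Lp w hw y) hFL hR (by rw [get_Lp hw hyw]; omega)
        rw [get_Lp hw hyw] at this; omega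

end Rp

section Sigma
open scoped Classical

variable (n : ℕ) (G : SimpleGraph ℕ)

/-- Non-isolated vertices of `G` in `{1,…,n}`. -/
noncomputable def NI : Finset ℕ := (Finset.Icc 1 n).filter (fun v => ¬ IsolatedIn n G v)

/-- Isolated vertices of `G` in `{1,…,n}`. -/
noncomputable def ISO : Finset ℕ := (Finset.Icc 1 n).filter (fun v => IsolatedIn n G v)

/-- Vertex list: non-isolated (increasing) followed by isolated (increasing). -/
noncomputable def ll : List ℕ := (NI n G).sort (· ≤ ·) ++ (ISO n G).sort (· ≤ ·)

lemma ll_length : (ll n G).length = n := by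
  rw [ll, List.length_append, Finset.length_sort, Finset.length_sort]
  have h := Finset.card_filter_add_card_filter_not
    (s := Finset.Icc 1 n) (fun v => IsolatedIn n G v)
  rw [Nat.card_Icc] at h
  rw [NI, ISO]
  omega

lemma mem_ll {x : ℕ} : x ∈ ll n G ↔ 1 ≤ x ∧ x ≤ n := by
  rw [ll, List.mem_append, Finset.mem_sort, Finset.mem_sort, NI, ISO,
    Finset.mem_filter, Finset.mem_filter, Finset.mem_Icc]
  by_cases h : IsolatedIn n G x <;> simp [h] <;> omega

lemma ll_nodup : (ll n G).Nodup := by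
  rw [ll]
  refine List.Nodup.append (Finset.sort_nodup _ _) (Finset.sort_nodup _ _) ?_
  intro x hx hy
  rw [Finset.mem_sort, NI, Finset.mem_filter] at hx
  rw [Finset.mem_sort, ISO, Finset.mem_filter] at hy
  exact hx.2 hy.2

/-- The underlying function of the relabeling permutation. -/
noncomputable def sig0 : ℕ → ℕ := fun t =>
  if h : 1 ≤ t ∧ t ≤ n ∧ t - 1 < (ll n G).length then (ll n G).get ⟨t - 1, h.2.2⟩ else t

lemma sig0_of_mem {t : ℕ} (h1 : 1 ≤ t) (h2 : t ≤ n) :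
    ∃ h : t - 1 < (ll n G).length, sig0 n G t = (ll n G).get ⟨t - 1, h⟩ := by
  have hlen : t - 1 < (ll n G).length := by rw [ll_length]; omega
  exact ⟨hlen, by rw [sig0, dif_pos ⟨h1, h2, hlen⟩]⟩

lemma sig0_mem {t : ℕ} (h1 : 1 ≤ t) (h2 : t ≤ n) :
    1 ≤ sig0 n G t ∧ sig0 n G t ≤ n := by
  obtain ⟨h, hs⟩ := sig0_of_mem n G h1 h2
  rw [hs]
  exact (mem_ll n G).mp (List.get_mem _ _)

lemma sig0_not_mem {t : ℕ} (h : ¬ (1 ≤ t ∧ t ≤ n)) : sig0 n G t = t := by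
  rw [sig0, dif_neg]; tauto

lemma sig0_bij : Function.Bijective (sig0 n G) := by
  constructor
  · intro a b hab
    by_cases ha : 1 ≤ a ∧ a ≤ n
    · obtain ⟨hla, hsa⟩ := sig0_of_mem n G ha.1 ha.2
      by_cases hb : 1 ≤ b ∧ b ≤ n
      · obtain ⟨hlb, hsb⟩ := sig0_of_mem n G hb.1 hb.2
        rw [hsa, hsb] at hab
        have := (List.Nodup.get_inj_iff (ll_nodup n G)).mp hab
        have := Fin.mk.injEq .. ▸ this
        omega
      · exfalso
        rw [sig0_not_mem n G hb] at hab
        have := (mem_ll n G).mp (hab ▸ hsa ▸ List.get_mem _ _)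
        omega
    · rw [sig0_not_mem n G ha] at hab
      by_cases hb : 1 ≤ b ∧ b ≤ n
      · exfalso
        obtain ⟨hlb, hsb⟩ := sig0_of_mem n G hb.1 hb.2
        have := (mem_ll n G).mp (hab ▸ hsb ▸ List.get_mem _ _)
        omega
      · rw [sig0_not_mem n G hb] at hab
        exact hab
  · intro y
    by_cases hy : 1 ≤ y ∧ y ≤ n
    · have : y ∈ ll n G := (mem_ll n G).mpr hy
      obtain ⟨⟨idx, hidx⟩, hget⟩ := List.mem_iff_get.mp this
      refine ⟨idx + 1, ?_⟩
      have h1 : 1 ≤ idx + 1 := by omega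
      have h2 : idx + 1 ≤ n := by have := ll_length n G; omega
      obtain ⟨hl, hs⟩ := sig0_of_mem n G h1 h2
      rw [hs]
      simpa using hget
    · exact ⟨y, sig0_not_mem n G hy⟩

lemma sig0_nonisolated {t : ℕ} (h1 : 1 ≤ t) (h2 : t ≤ (NI n G).card) :
    ¬ IsolatedIn n G (sig0 n G t) := by
  have hn : t ≤ n := by
    have := Finset.card_filter_le (Finset.Icc 1 n) (fun v => ¬ IsolatedIn n G v)
    rw [Nat.card_Icc] at this
    rw [NI] at h2
    omega
  obtain ⟨hl, hs⟩ := sig0_of_mem n G h1 hn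
  have hlt : t - 1 < ((NI n G).sort (· ≤ ·)).length := by
    rw [Finset.length_sort]; omega
  have : sig0 n G t = ((NI n G).sort (· ≤ ·)).get ⟨t - 1, hlt⟩ := by
    rw [hs]
    simp only [ll, List.get_eq_getElem]; exact List.getElem_append_left hlt
  rw [this]
  have hm : ((NI n G).sort (· ≤ ·)).get ⟨t - 1, hlt⟩ ∈ NI n G := by
    rw [← Finset.mem_sort (· ≤ ·)]
    exact List.get_mem _ _
  exact (Finset.mem_filter.mp hm).2

lemma sig0_isolated {t : ℕ} (h1 : (NI n G).card < t) (h2 : t ≤ n) :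
    IsolatedIn n G (sig0 n G t) := by
  obtain ⟨hl, hs⟩ := sig0_of_mem n G (by omega) h2
  have hke : ((NI n G).sort (· ≤ ·)).length = (NI n G).card := Finset.length_sort _
  have hge : ((NI n G).sort (· ≤ ·)).length ≤ t - 1 := by omega
  have hlt : t - 1 - ((NI n G).sort (· ≤ ·)).length < ((ISO n G).sort (· ≤ ·)).length := by
    have := ll_length n G
    rw [ll, List.length_append] at this
    omega
  have : sig0 n G t = ((ISO n G).sort (· ≤ ·)).get ⟨t - 1 - _, hlt⟩ := by
    rw [hs]
    simp only [ll, List.get_eq_getElem]; exact List.getElem_append_right hge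
  rw [this]
  have hm : ((ISO n G).sort (· ≤ ·)).get ⟨_, hlt⟩ ∈ ISO n G := by
    rw [← Finset.mem_sort (· ≤ ·)]
    exact List.get_mem _ _
  exact (Finset.mem_filter.mp hm).2

lemma sig0_mono {a b : ℕ} (h1 : 1 ≤ a) (h2 : a < b) (h3 : b ≤ (NI n G).card) :
    sig0 n G a < sig0 n G b := by
  have hbn : b ≤ n := by
    have := Finset.card_filter_le (Finset.Icc 1 n) (fun v => ¬ IsolatedIn n G v)
    rw [Nat.card_Icc] at this
    rw [NI] at h3
    omega
  obtain ⟨hla, hsa⟩ := sig0_of_mem n G h1 (by omega)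
  obtain ⟨hlb, hsb⟩ := sig0_of_mem n G (by omega) hbn
  have hka : a - 1 < ((NI n G).sort (· ≤ ·)).length := by rw [Finset.length_sort]; omega
  have hkb : b - 1 < ((NI n G).sort (· ≤ ·)).length := by rw [Finset.length_sort]; omega
  have ha' : sig0 n G a = ((NI n G).sort (· ≤ ·)).get ⟨a - 1, hka⟩ := by
    rw [hsa]; simp only [ll, List.get_eq_getElem]; exact List.getElem_append_left hka
  have hb' : sig0 n G b = ((NI n G).sort (· ≤ ·)).get ⟨b - 1, hkb⟩ := by
    rw [hsb]; simp only [ll, List.get_eq_getElem]; exact List.getElem_append_left hkb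
  rw [ha', hb']
  have hsorted := (Finset.sortedLT_sort (NI n G)).pairwise
  exact List.pairwise_iff_get.mp hsorted ⟨a - 1, hka⟩ ⟨b - 1, hkb⟩ (by simp; omega)

end Sigma

lemma get_Rp {w : List ℕ} {i : ℕ} (hw : 0 < w.length) (hi : i ∈ w) :
    w.get (Rp w hw i) = i := by
  rw [Rp]; split
  · exact get_Fp hw hi
  · exact get_Lp hw hi

lemma main_pos (n : ℕ) (G : SimpleGraph ℕ) (hn : 0 < n) (w : List ℕ)
    (hA : Avoids321 w) (hrep : Represents12 n G w) :
    ∃ σ : Equiv.Perm ℕ,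
      (∀ x, 1 ≤ x → x ≤ n → 1 ≤ σ x ∧ σ x ≤ n) ∧
      (∀ i j, 1 ≤ i → i ≤ n → 1 ≤ j → j ≤ n →
        IsolatedIn n G (σ i) → ¬ IsolatedIn n G (σ j) → j < i) ∧
      ∃ π, IsPermWord n π ∧ Avoids321 π ∧
        (∀ i j, 1 ≤ i → i < j → j ≤ n → (G.Adj (σ i) (σ j) ↔ EveryBefore π j i)) := by
  classical
  have hw : 0 < w.length := List.length_pos_of_mem (hrep.2.1 1 le_rfl hn)
  set k := (NI n G).card with hk
  have hkn : k ≤ n := by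
    have := Finset.card_filter_le (Finset.Icc 1 n) (fun v => ¬ IsolatedIn n G v)
    rw [Nat.card_Icc] at this
    rw [hk, NI]
    omega
  -- the sorting key
  set fst : ℕ → ℕ :=
    fun t => if t ≤ k then (Rp w hw (sig0 n G t)).val else w.length + t with hfst
  set key : ℕ → Lex (ℕ × ℕ) := fun t => toLex (fst t, t) with hkey
  set r : ℕ → ℕ → Prop := fun a b => key a ≤ key b with hr
  haveI : DecidableRel r := fun a b => Classical.dec _
  haveI : IsTrans ℕ r := ⟨fun a b c h1 h2 => le_trans h1 h2⟩
  haveI : IsAntisymm ℕ r := ⟨fun a b h1 h2 => by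
    have h := le_antisymm h1 h2
    exact congrArg (fun x => (ofLex x).2) h⟩
  haveI : IsTotal ℕ r := ⟨fun a b => le_total _ _⟩
  set π : List ℕ := (Finset.Icc 1 n).sort r with hπ
  have hπnd : π.Nodup := Finset.sort_nodup _ _
  have hπfin : π.toFinset = Finset.Icc 1 n := Finset.sort_toFinset _ _
  have hπmem : ∀ t, t ∈ π ↔ 1 ≤ t ∧ t ≤ n := by
    intro t
    rw [← List.mem_toFinset, hπfin, Finset.mem_Icc]
  -- fst values in range, injectivity
  have hfst_lt : ∀ t, t ≤ k → fst t = (Rp w hw (sig0 n G t)).val := by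
    intro t ht; rw [hfst]; simp [ht]
  have hfst_gt : ∀ t, k < t → fst t = w.length + t := by
    intro t ht; rw [hfst]; simp [Nat.not_le.mpr ht]
  have hsigw : ∀ t, 1 ≤ t → t ≤ n → sig0 n G t ∈ w := by
    intro t h1 h2
    obtain ⟨hb1, hb2⟩ := sig0_mem n G h1 h2
    exact hrep.2.1 _ hb1 hb2
  have hfstinj : ∀ s t, 1 ≤ s → s ≤ n → 1 ≤ t → t ≤ n → fst s = fst t → s = t := by
    intro s t hs1 hs2 ht1 ht2 h
    by_cases hsk : s ≤ k <;> by_cases htk : t ≤ k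
    · rw [hfst_lt s hsk, hfst_lt t htk] at h
      have hR : Rp w hw (sig0 n G s) = Rp w hw (sig0 n G t) := Fin.val_injective h
      have := get_Rp hw (hsigw s hs1 hs2)
      rw [hR, get_Rp hw (hsigw t ht1 ht2)] at this
      exact (sig0_bij n G).1 this.symm
    · rw [hfst_lt s hsk, hfst_gt t (by omega)] at h
      have := (Rp w hw (sig0 n G s)).is_lt
      omega
    · rw [hfst_gt s (by omega), hfst_lt t htk] at h
      have := (Rp w hw (sig0 n G t)).is_lt
      omega
    · rw [hfst_gt s (by omega), hfst_gt t (by omega)] at h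
      omega
  -- sorted: fst strictly increases along π
  have hpair : ∀ a b : Fin π.length, a < b → r (π.get a) (π.get b) :=
    List.pairwise_iff_get.mp (Finset.pairwise_sort _ r)
  have hmono : ∀ a b : Fin π.length, a < b → fst (π.get a) < fst (π.get b) := by
    intro a b hab
    have h := hpair a b hab
    rw [hr] at h
    rcases Prod.Lex.le_iff.mp h with h | ⟨h1, _⟩
    · exact h
    · exfalso
      have ha : 1 ≤ π.get a ∧ π.get a ≤ n := (hπmem _).mp (by exact List.get_mem π a)
      have hb : 1 ≤ π.get b ∧ π.get b ≤ n := (hπmem _).mp (by exact List.get_mem π b)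
      have heq : π.get a = π.get b := hfstinj _ _ ha.1 ha.2 hb.1 hb.2 h1
      exact absurd ((List.Nodup.get_inj_iff hπnd).mp heq) (ne_of_lt hab)
  -- position order in π matches fst order
  have hposlt : ∀ (s t : ℕ) (ps pt : Fin π.length), 1 ≤ s → s ≤ n → 1 ≤ t → t ≤ n →
      s ≠ t → π.get ps = s → π.get pt = t → (ps < pt ↔ fst s < fst t) := by
    intro s t ps pt hs1 hs2 ht1 ht2 hst hgs hgt
    constructor
    · intro h
      have := hmono ps pt h
      rwa [hgs, hgt] at this
    · intro h
      rcases lt_trichotomy ps pt with h' | h' | h'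
      · exact h'
      · exact absurd (by rw [← hgs, ← hgt, h']) hst
      · exfalso
        have := hmono pt ps h'
        rw [hgs, hgt] at this
        omega
  refine ⟨Equiv.ofBijective (sig0 n G) (sig0_bij n G), ?_, ?_, π, ?_, ?_, ?_⟩
  · intro x h1 h2
    exact sig0_mem n G h1 h2
  · -- isolated vertices get the largest labels
    intro i j hi1 hin hj1 hjn hiso hniso
    have hik : k < i := by
      by_contra h
      exact absurd hiso (sig0_nonisolated n G hi1 (by omega))
    have hjk : j ≤ k := by
      by_contra h
      exact absurd (sig0_isolated n G (by omega) hjn) hniso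
    omega
  · -- π is a permutation word
    refine List.perm_of_nodup_nodup_toFinset_eq hπnd (List.nodup_range' (s := 1) (n := n)) ?_
    rw [hπfin]
    ext a
    rw [List.mem_toFinset, List.mem_range'_1, Finset.mem_Icc]
    omega
  · -- π avoids 321
    rintro ⟨a, b, c, hab, hbc, h1, h2⟩
    have ha : 1 ≤ π.get a ∧ π.get a ≤ n := (hπmem _).mp (by exact List.get_mem π a)
    have hb : 1 ≤ π.get b ∧ π.get b ≤ n := (hπmem _).mp (by exact List.get_mem π b)
    have hc : 1 ≤ π.get c ∧ π.get c ≤ n := (hπmem _).mp (by exact List.get_mem π c)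
    have f1 : fst (π.get a) < fst (π.get b) := hmono a b hab
    have f2 : fst (π.get b) < fst (π.get c) := hmono b c hbc
    -- all three labels are ≤ k
    have hak : π.get a ≤ k := by
      by_contra hgt
      rw [hfst_gt _ (by omega)] at f1
      by_cases hbk : π.get b ≤ k
      · rw [hfst_lt _ hbk] at f1
        have := (Rp w hw (sig0 n G (π.get b))).is_lt
        omega
      · rw [hfst_gt _ (by omega)] at f1
        omega
    have hbk : π.get b ≤ k := by omega
    have hck : π.get c ≤ k := by omega
    rw [hfst_lt _ hak, hfst_lt _ hbk] at f1
    rw [hfst_lt _ hbk, hfst_lt _ hck] at f2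
    -- produce a 321 pattern in w
    refine hA ⟨Rp w hw (sig0 n G (π.get a)), Rp w hw (sig0 n G (π.get b)),
      Rp w hw (sig0 n G (π.get c)), f1, f2, ?_, ?_⟩
    · rw [get_Rp hw (hsigw _ hb.1 hb.2), get_Rp hw (hsigw _ hc.1 hc.2)]
      exact sig0_mono n G hc.1 h1 hbk
    · rw [get_Rp hw (hsigw _ ha.1 ha.2), get_Rp hw (hsigw _ hb.1 hb.2)]
      exact sig0_mono n G hb.1 h2 hak
  · -- adjacency is reflected by π
    intro i j hi1 hij hjn
    have hi2 : i ≤ n := by omega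
    have hj1 : 1 ≤ j := by omega
    obtain ⟨pi, hgi⟩ := List.mem_iff_get.mp ((hπmem i).mpr ⟨hi1, hi2⟩)
    obtain ⟨pj, hgj⟩ := List.mem_iff_get.mp ((hπmem j).mpr ⟨hj1, hjn⟩)
    have hEB : EveryBefore π j i ↔ pj < pi := by
      constructor
      · intro h
        exact h pj pi hgj hgi
      · intro h p q hp hq
        have hpj : p = pj := (List.Nodup.get_inj_iff hπnd).mp (by rw [hp, hgj])
        have hqi : q = pi := (List.Nodup.get_inj_iff hπnd).mp (by rw [hq, hgi])
        rw [hpj, hqi]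
        exact h
    rw [hEB, hposlt j i pj pi hj1 hjn hi1 hi2 (by omega) hgj hgi]
    show G.Adj (sig0 n G i) (sig0 n G j) ↔ _
    by_cases hjk : j ≤ k
    · -- both non-isolated
      have hik : i ≤ k := by omega
      rw [hfst_lt _ hjk, hfst_lt _ hik]
      have hσi := sig0_mem n G hi1 hi2
      have hσj := sig0_mem n G hj1 hjn
      rw [core hw hA hrep hσi.1 (sig0_mono n G hi1 hij hjk) hσj.2
        (sig0_nonisolated n G hi1 hik) (sig0_nonisolated n G hj1 hjk)]
      exact Iff.rfl
    · by_cases hik : i ≤ k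
      · -- σ j isolated, σ i not
        have hiso := sig0_isolated n G (by omega) hjn
        have hσi := sig0_mem n G hi1 hi2
        constructor
        · intro hadj
          exact absurd hadj.symm (hiso _ hσi.1 hσi.2)
        · intro h
          exfalso
          rw [hfst_gt _ (by omega), hfst_lt _ hik] at h
          have := (Rp w hw (sig0 n G i)).is_lt
          omega
      · -- both isolated
        have hiso := sig0_isolated n G (by omega) hi2
        have hσj := sig0_mem n G hj1 hjn
        constructor
        · intro hadj
          exact absurd hadj (hiso _ hσj.1 hσj.2)
        · intro h
          exfalso
          rw [hfst_gt _ (by omega), hfst_gt _ (by omega)] at h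
          omega


end Stmt9Aux

theorem stmt_9 (n : ℕ) (G : SimpleGraph ℕ)
    (h : ∃ w, Avoids321 w ∧ Represents12 n G w) :
    ∃ σ : Equiv.Perm ℕ,
      (∀ x, 1 ≤ x → x ≤ n → 1 ≤ σ x ∧ σ x ≤ n) ∧
      (∀ i j, 1 ≤ i → i ≤ n → 1 ≤ j → j ≤ n →
        IsolatedIn n G (σ i) → ¬ IsolatedIn n G (σ j) → j < i) ∧
      ∃ π, IsPermWord n π ∧ Avoids321 π ∧
        (∀ i j, 1 ≤ i → i < j → j ≤ n → (G.Adj (σ i) (σ j) ↔ EveryBefore π j i)) := by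
  obtain ⟨w, hA, hrep⟩ := h
  rcases Nat.eq_zero_or_pos n with hn0 | hn
  · subst hn0
    refine ⟨Equiv.refl ℕ, ?_, ?_, [], ?_, ?_, ?_⟩
    · intro x h1 h2; omega
    · intro i j h1 h2; omega
    · simp [IsPermWord]
    · rintro ⟨p, q, r, -⟩
      exact p.elim0
    · intro i j h1 h2 h3; omega
  · exact Stmt9Aux.main_pos n G hn w hA hrep
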